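/- Let v₁, …, v_n be unit vectors in S² ⊂ ℝ³ and suppose some vector v occurs among them with multiplicity i₀ > n/2. Then for every rotation-and-Möbius transform of the configuration induced by SL(2,ℂ) acting on ℙ¹ ≅ S², the sum of the resulting unit vectors is nonzero; moreover the infimum over the SL(2,ℂ)-orbit of the norm of the sum equals 2i₀ - n. -/

import Mathlib

noncomputable section

open scoped Classical

open Matrix

/-- The complex projective line `ℙ¹(ℂ)`. -/
abbrev ProjLine := Projectivization ℂ (Fin 2 → ℂ)

/-- The standard identification `ℙ¹(ℂ) ≅ S²`: `[z : w]` is sent to the unit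
vector `(2 Re(z w̄), 2 Im(z w̄), |z|² - |w|²)/(|z|² + |w|²)` in `ℝ³`. -/
def toSphere (x : ProjLine) : EuclideanSpace ℝ (Fin 3) :=
  let z := x.rep 0
  let w := x.rep 1
  let s := Complex.normSq z + Complex.normSq w
  (WithLp.equiv 2 (Fin 3 → ℝ)).symm
    ![2 * (z * (starRingEnd ℂ) w).re / s, 2 * (z * (starRingEnd ℂ) w).im / s,
      (Complex.normSq z - Complex.normSq w) / s]

/-- The Möbius action of `SL(2,ℂ)` on `ℙ¹(ℂ)`. -/
def mobius (g : Matrix.SpecialLinearGroup (Fin 2) ℂ) (x : ProjLine) : ProjLine :=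
  Projectivization.mk ℂ ((g : Matrix (Fin 2) (Fin 2) ℂ).mulVec x.rep) (by
    intro h
    apply x.rep_nonzero
    have h2 : ((g⁻¹ : Matrix.SpecialLinearGroup (Fin 2) ℂ) :
        Matrix (Fin 2) (Fin 2) ℂ).mulVec
        (((g : Matrix.SpecialLinearGroup (Fin 2) ℂ) :
          Matrix (Fin 2) (Fin 2) ℂ).mulVec x.rep) = 0 := by
      rw [h]; simp [Matrix.mulVec_zero]
    rwa [Matrix.mulVec_mulVec, ← Matrix.SpecialLinearGroup.coe_mul,
      inv_mul_cancel, Matrix.SpecialLinearGroup.coe_one, Matrix.one_mulVec] at h2)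

namespace MomentAux


def F (v : Fin 2 → ℂ) : EuclideanSpace ℝ (Fin 3) :=
  let z := v 0
  let w := v 1
  let s := Complex.normSq z + Complex.normSq w
  (WithLp.equiv 2 (Fin 3 → ℝ)).symm
    ![2 * (z * (starRingEnd ℂ) w).re / s, 2 * (z * (starRingEnd ℂ) w).im / s,
      (Complex.normSq z - Complex.normSq w) / s]

lemma toSphere_eq_F (x : ProjLine) : toSphere x = F x.rep := rfl

lemma s_ne_zero {v : Fin 2 → ℂ} (hv : v ≠ 0) :
    Complex.normSq (v 0) + Complex.normSq (v 1) ≠ 0 := by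
  intro h
  have h0 : Complex.normSq (v 0) = 0 ∧ Complex.normSq (v 1) = 0 := by
    constructor <;> nlinarith [Complex.normSq_nonneg (v 0), Complex.normSq_nonneg (v 1)]
  apply hv
  funext i
  fin_cases i
  · exact Complex.normSq_eq_zero.mp h0.1
  · exact Complex.normSq_eq_zero.mp h0.2

lemma im_ofReal_mul (r : ℝ) (z : ℂ) : ((r:ℂ) * z).im = r * z.im := by
  simp [Complex.mul_im]

lemma F_smul (c : ℂ) (hc : c ≠ 0) (v : Fin 2 → ℂ) (hv : v ≠ 0) : F (c • v) = F v := by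
  have hs := s_ne_zero hv
  have hk : Complex.normSq c ≠ 0 := (Complex.normSq_pos.mpr hc).ne'
  have hzw : (c • v) 0 * (starRingEnd ℂ) ((c • v) 1)
      = (Complex.normSq c : ℂ) * (v 0 * (starRingEnd ℂ) (v 1)) := by
    simp only [Pi.smul_apply, smul_eq_mul, map_mul (starRingEnd ℂ)]
    rw [← Complex.mul_conj]; ring
  have hn0 : Complex.normSq ((c • v) 0) = Complex.normSq c * Complex.normSq (v 0) := by
    simp [Complex.normSq_mul]
  have hn1 : Complex.normSq ((c • v) 1) = Complex.normSq c * Complex.normSq (v 1) := by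
    simp [Complex.normSq_mul]
  unfold F
  dsimp only
  rw [hzw, hn0, hn1, Complex.re_ofReal_mul, im_ofReal_mul]
  rw [show Complex.normSq c * Complex.normSq (v 0) + Complex.normSq c * Complex.normSq (v 1)
      = Complex.normSq c * (Complex.normSq (v 0) + Complex.normSq (v 1)) from by ring]
  rw [show Complex.normSq c * Complex.normSq (v 0) - Complex.normSq c * Complex.normSq (v 1)
      = Complex.normSq c * (Complex.normSq (v 0) - Complex.normSq (v 1)) from by ring]
  rw [show (2:ℝ) * (Complex.normSq c * (v 0 * (starRingEnd ℂ) (v 1)).re)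
      = Complex.normSq c * (2 * (v 0 * (starRingEnd ℂ) (v 1)).re) from by ring]
  rw [show (2:ℝ) * (Complex.normSq c * (v 0 * (starRingEnd ℂ) (v 1)).im)
      = Complex.normSq c * (2 * (v 0 * (starRingEnd ℂ) (v 1)).im) from by ring]
  rw [mul_div_mul_left _ _ hk, mul_div_mul_left _ _ hk, mul_div_mul_left _ _ hk]

lemma F_mk (v : Fin 2 → ℂ) (hv : v ≠ 0) :
    toSphere (Projectivization.mk ℂ v hv) = F v := by
  rw [toSphere_eq_F]
  obtain ⟨a, ha⟩ := (Projectivization.mk_eq_mk_iff ℂ _ _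
    (Projectivization.rep_nonzero _) hv).mp (Projectivization.mk_rep _)
  rw [← ha, Units.smul_def, F_smul _ a.ne_zero _ hv]

lemma norm_F (v : Fin 2 → ℂ) (hv : v ≠ 0) : ‖F v‖ = 1 := by
  have hs := s_ne_zero hv
  have key : (v 0 * (starRingEnd ℂ) (v 1)).re ^ 2 + (v 0 * (starRingEnd ℂ) (v 1)).im ^ 2
      = Complex.normSq (v 0) * Complex.normSq (v 1) := by
    have h1 := Complex.normSq_apply (v 0 * (starRingEnd ℂ) (v 1))
    have h2 : Complex.normSq (v 0 * (starRingEnd ℂ) (v 1))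
        = Complex.normSq (v 0) * Complex.normSq (v 1) := by
      rw [Complex.normSq_mul, Complex.normSq_conj]
    nlinarith [h1, h2]
  rw [EuclideanSpace.norm_eq, Real.sqrt_eq_one, Fin.sum_univ_three]
  unfold F
  dsimp only
  simp only [WithLp.equiv_symm_apply, WithLp.ofLp_toLp, PiLp.toLp_apply, Matrix.cons_val_zero, Matrix.cons_val_one,
    Matrix.head_cons, Matrix.cons_val_two, Matrix.tail_cons, Real.norm_eq_abs, sq_abs]
  field_simp
  simp only [Complex.normSq_apply, Complex.mul_re, Complex.mul_im, Complex.conj_re,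
    Complex.conj_im]
  ring

lemma mulVec_ne_zero (g : Matrix.SpecialLinearGroup (Fin 2) ℂ) {v : Fin 2 → ℂ}
    (hv : v ≠ 0) : (g : Matrix (Fin 2) (Fin 2) ℂ).mulVec v ≠ 0 := by
  intro h
  apply hv
  have h2 : ((g⁻¹ : Matrix.SpecialLinearGroup (Fin 2) ℂ) :
      Matrix (Fin 2) (Fin 2) ℂ).mulVec
      (((g : Matrix.SpecialLinearGroup (Fin 2) ℂ) :
        Matrix (Fin 2) (Fin 2) ℂ).mulVec v) = 0 := by
    rw [h]; simp [Matrix.mulVec_zero]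
  rwa [Matrix.mulVec_mulVec, ← Matrix.SpecialLinearGroup.coe_mul,
    inv_mul_cancel, Matrix.SpecialLinearGroup.coe_one, Matrix.one_mulVec] at h2

lemma mulVec_inj (g : Matrix.SpecialLinearGroup (Fin 2) ℂ) {v w : Fin 2 → ℂ}
    (h : (g : Matrix (Fin 2) (Fin 2) ℂ).mulVec v
      = (g : Matrix (Fin 2) (Fin 2) ℂ).mulVec w) : v = w := by
  have h2 := congrArg (((g⁻¹ : Matrix.SpecialLinearGroup (Fin 2) ℂ) :
      Matrix (Fin 2) (Fin 2) ℂ).mulVec) h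
  rwa [Matrix.mulVec_mulVec, Matrix.mulVec_mulVec, ← Matrix.SpecialLinearGroup.coe_mul,
    inv_mul_cancel, Matrix.SpecialLinearGroup.coe_one, Matrix.one_mulVec,
    Matrix.one_mulVec] at h2

lemma toSphere_mobius (g : Matrix.SpecialLinearGroup (Fin 2) ℂ) (x : ProjLine) :
    toSphere (mobius g x) = F ((g : Matrix (Fin 2) (Fin 2) ℂ).mulVec x.rep) :=
  F_mk _ _

def north : EuclideanSpace ℝ (Fin 3) := (WithLp.equiv 2 (Fin 3 → ℝ)).symm ![0, 0, 1]

lemma norm_north : ‖north‖ = 1 := by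
  rw [EuclideanSpace.norm_eq, Real.sqrt_eq_one, Fin.sum_univ_three]
  unfold north
  norm_num
  exact Or.inl rfl

lemma F_north {c : ℂ} (hc : c ≠ 0) : F ![c, 0] = north := by
  have hk : Complex.normSq c ≠ 0 := (Complex.normSq_pos.mpr hc).ne'
  unfold F north
  dsimp only
  congr 1
  simp [div_self hk]

lemma div_helper1 (C t A B : ℝ) (ht : 0 < t) (hA : 0 ≤ A) (hB : 0 < B) :
    C / (t * A + t⁻¹ * B) = C * t / (t ^ 2 * A + B) := by
  have h1 : t * A + t⁻¹ * B ≠ 0 := by positivity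
  have h2 : t ^ 2 * A + B ≠ 0 := by positivity
  rw [div_eq_div_iff h1 h2]
  field_simp

lemma div_helper2 (t A B : ℝ) (ht : 0 < t) (hA : 0 ≤ A) (hB : 0 < B) :
    (t * A - t⁻¹ * B) / (t * A + t⁻¹ * B) = (t ^ 2 * A - B) / (t ^ 2 * A + B) := by
  have h1 : t * A + t⁻¹ * B ≠ 0 := by positivity
  have h2 : t ^ 2 * A + B ≠ 0 := by positivity
  rw [div_eq_div_iff h1 h2]
  field_simp

def south : EuclideanSpace ℝ (Fin 3) := (WithLp.equiv 2 (Fin 3 → ℝ)).symm ![0, 0, -1]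

/-- The explicit curve through the sphere. -/
def G (R I Z W : ℝ) (x : ℝ) : EuclideanSpace ℝ (Fin 3) :=
  (WithLp.equiv 2 (Fin 3 → ℝ)).symm
    ![2 * R * x / (x ^ 2 * Z + W), 2 * I * x / (x ^ 2 * Z + W),
      (x ^ 2 * Z - W) / (x ^ 2 * Z + W)]

lemma F_south_formula (z w : ℂ) (hw : w ≠ 0) {τ : ℝ} (hτ : 0 < τ) :
    F ![(τ : ℂ) * z, ((τ : ℂ))⁻¹ * w]
      = G (z * (starRingEnd ℂ) w).re (z * (starRingEnd ℂ) w).im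
          (Complex.normSq z) (Complex.normSq w) (τ ^ 2) := by
  have hτ0 : (τ : ℂ) ≠ 0 := Complex.ofReal_ne_zero.mpr hτ.ne'
  have hprod : ((τ : ℂ) * z) * (starRingEnd ℂ) (((τ : ℂ))⁻¹ * w)
      = z * (starRingEnd ℂ) w := by
    rw [_root_.map_mul, map_inv₀, Complex.conj_ofReal]
    field_simp
  have hZ : Complex.normSq ((τ : ℂ) * z) = τ ^ 2 * Complex.normSq z := by
    rw [Complex.normSq_mul, Complex.normSq_ofReal]; ring
  have hW : Complex.normSq (((τ : ℂ))⁻¹ * w) = (τ ^ 2)⁻¹ * Complex.normSq w := by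
    rw [Complex.normSq_mul, Complex.normSq_inv, Complex.normSq_ofReal]; ring
  have ht2 : (0:ℝ) < τ ^ 2 := by positivity
  have hZ0 : 0 ≤ Complex.normSq z := Complex.normSq_nonneg z
  have hW0 : 0 < Complex.normSq w := Complex.normSq_pos.mpr hw
  unfold F G
  dsimp only
  simp only [Matrix.cons_val_zero, Matrix.cons_val_one, Matrix.head_cons]
  rw [hprod, hZ, hW]
  congr 1
  funext i
  fin_cases i
  · exact div_helper1 _ _ _ _ ht2 hZ0 hW0
  · exact div_helper1 _ _ _ _ ht2 hZ0 hW0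
  · exact div_helper2 _ _ _ ht2 hZ0 hW0

lemma G_continuous (R I Z W : ℝ) (hZ : 0 ≤ Z) (hW : 0 < W) : Continuous (G R I Z W) := by
  have hden : ∀ x : ℝ, x ^ 2 * Z + W ≠ 0 := fun x => by nlinarith [sq_nonneg x]
  unfold G
  refine (PiLp.continuous_toLp 2 (fun _ : Fin 3 => ℝ)).comp ?_
  apply continuous_pi
  intro i
  fin_cases i
  · exact Continuous.div (by fun_prop) (by fun_prop) hden
  · exact Continuous.div (by fun_prop) (by fun_prop) hden
  · exact Continuous.div (by fun_prop) (by fun_prop) hden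

lemma G_zero (R I Z W : ℝ) (hW : 0 < W) : G R I Z W 0 = south := by
  unfold G south
  congr 1
  funext i
  fin_cases i
  · show 2 * R * 0 / (0 ^ 2 * Z + W) = 0
    simp
  · show 2 * I * 0 / (0 ^ 2 * Z + W) = 0
    simp
  · show (0 ^ 2 * Z - W) / (0 ^ 2 * Z + W) = -1
    simp [neg_div, div_self hW.ne']

lemma tendsto_inv_sq : Filter.Tendsto (fun k : ℕ => ((k : ℝ) + 1)⁻¹ ^ 2)
    Filter.atTop (nhds 0) := by
  have h1 : Filter.Tendsto (fun k : ℕ => ((k : ℝ) + 1)⁻¹) Filter.atTop (nhds 0) := by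
    simpa [one_div] using tendsto_one_div_add_atTop_nhds_zero_nat (𝕜 := ℝ)
  simpa using h1.pow 2

lemma tendsto_F_south (z w : ℂ) (hw : w ≠ 0) :
    Filter.Tendsto
      (fun k : ℕ => F ![((((k : ℝ) + 1)⁻¹ : ℝ) : ℂ) * z, ((((k : ℝ) + 1)⁻¹ : ℝ) : ℂ)⁻¹ * w])
      Filter.atTop (nhds south) := by
  have hW : 0 < Complex.normSq w := Complex.normSq_pos.mpr hw
  have hformula : ∀ k : ℕ,
      F ![((((k : ℝ) + 1)⁻¹ : ℝ) : ℂ) * z, ((((k : ℝ) + 1)⁻¹ : ℝ) : ℂ)⁻¹ * w]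
        = G (z * (starRingEnd ℂ) w).re (z * (starRingEnd ℂ) w).im
            (Complex.normSq z) (Complex.normSq w) (((k : ℝ) + 1)⁻¹ ^ 2) :=
    fun k => F_south_formula z w hw (by positivity)
  simp only [hformula]
  have hc := (G_continuous (z * (starRingEnd ℂ) w).re (z * (starRingEnd ℂ) w).im
    (Complex.normSq z) (Complex.normSq w) (Complex.normSq_nonneg z) hW)
  have := (hc.tendsto 0).comp tendsto_inv_sq
  rwa [G_zero _ _ _ _ hW] at this

lemma norm_toSphere_mobius (g : Matrix.SpecialLinearGroup (Fin 2) ℂ) (x : ProjLine) :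
    ‖toSphere (mobius g x)‖ = 1 := by
  rw [toSphere_mobius]
  exact norm_F _ (mulVec_ne_zero g x.rep_nonzero)

lemma lower_bound (n : ℕ) (p : Fin n → ProjLine) (q : ProjLine) (i0 : ℕ)
    (hi0 : i0 = (Finset.univ.filter fun i => p i = q).card)
    (g : Matrix.SpecialLinearGroup (Fin 2) ℂ) :
    (2 * (i0 : ℝ) - n) ≤ ‖∑ i, toSphere (mobius g (p i))‖ := by
  classical
  set A := Finset.univ.filter fun i => p i = q with hAdef
  have hle : i0 ≤ n := by
    rw [hi0]
    simpa using Finset.card_filter_le Finset.univ (fun i => p i = q)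
  set u := toSphere (mobius g q) with hu
  have hSA : ∑ i ∈ A, toSphere (mobius g (p i)) = (i0 : ℝ) • u := by
    rw [Finset.sum_congr rfl (fun i hi => by
      rw [(Finset.mem_filter.mp hi).2]), Finset.sum_const, ← hi0,
      Nat.cast_smul_eq_nsmul ℝ]
  have hnormu : ‖u‖ = 1 := norm_toSphere_mobius g q
  have hcard : ((Finset.univ.filter fun i => ¬ p i = q).card : ℝ) = n - i0 := by
    rw [Finset.filter_not, Finset.card_sdiff_of_subset (Finset.filter_subset _ _)]
    rw [← hAdef, ← hi0, Finset.card_univ, Fintype.card_fin, Nat.cast_sub hle]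
  have hSB : ‖∑ i ∈ Finset.univ.filter (fun i => ¬ p i = q), toSphere (mobius g (p i))‖
      ≤ (n : ℝ) - i0 := by
    refine (norm_sum_le _ _).trans ?_
    rw [Finset.sum_congr rfl (fun i _ => norm_toSphere_mobius g (p i)),
      Finset.sum_const, nsmul_eq_mul, mul_one, hcard]
  have hsplit : ∑ i ∈ A, toSphere (mobius g (p i))
      + ∑ i ∈ Finset.univ.filter (fun i => ¬ p i = q), toSphere (mobius g (p i))
      = ∑ i, toSphere (mobius g (p i)) :=
    Finset.sum_filter_add_sum_filter_not _ _ _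
  have hSAnorm : ‖∑ i ∈ A, toSphere (mobius g (p i))‖ = (i0 : ℝ) := by
    rw [hSA, norm_smul, hnormu, mul_one, Real.norm_natCast]
  have htri : ‖∑ i ∈ A, toSphere (mobius g (p i))‖
      ≤ ‖∑ i, toSphere (mobius g (p i))‖
        + ‖∑ i ∈ Finset.univ.filter (fun i => ¬ p i = q), toSphere (mobius g (p i))‖ := by
    rw [← hsplit]
    have h := norm_sub_le
      (∑ i ∈ A, toSphere (mobius g (p i))
        + ∑ i ∈ Finset.univ.filter (fun i => ¬ p i = q), toSphere (mobius g (p i)))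
      (∑ i ∈ Finset.univ.filter (fun i => ¬ p i = q), toSphere (mobius g (p i)))
    rwa [add_sub_cancel_right] at h
  rw [hSAnorm] at htri
  linarith

lemma norm_combo (c d : ℝ) (hcd : 0 ≤ c - d) :
    ‖(c • north + d • south : EuclideanSpace ℝ (Fin 3))‖ = c - d := by
  rw [EuclideanSpace.norm_eq, Fin.sum_univ_three]
  simp only [PiLp.add_apply, PiLp.smul_apply, north, south, WithLp.equiv_symm_apply, WithLp.ofLp_toLp, PiLp.toLp_apply,
    Matrix.cons_val_zero, Matrix.cons_val_one, Matrix.head_cons, Matrix.cons_val_two,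
    Matrix.tail_cons, smul_eq_mul, Real.norm_eq_abs, sq_abs]
  rw [show c * 0 + d * 0 = 0 by ring, show c * 1 + d * (-1) = c - d by ring,
    show (0:ℝ) ^ 2 + 0 ^ 2 + (c - d) ^ 2 = (c - d) ^ 2 by ring]
  exact Real.sqrt_sq hcd

end MomentAux

open MomentAux in
/-- Let `p` be a configuration of `n` points on `ℙ¹ ≅ S²` (equivalently `n`
unit vectors in `S²`) in which some point `q` occurs with multiplicity
`i₀ > n/2`.  Then for every transform of the configuration by `SL(2,ℂ)`
(acting by Möbius transformations on `ℙ¹ ≅ S²`), the sum of the resulting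
unit vectors is nonzero; moreover the infimum over the `SL(2,ℂ)`-orbit of
the norm of the sum — the moment map `μ(v₁,…,v_n) = v₁ + ⋯ + v_n` for the
`SO(3)`-action — equals `2i₀ - n`. -/
theorem unstable_configuration_moment_infimum (n : ℕ) (p : Fin n → ProjLine)
    (q : ProjLine) (i0 : ℕ)
    (hi0 : i0 = (Finset.univ.filter fun i => p i = q).card)
    (hbig : 2 * i0 > n) :
    (∀ g : Matrix.SpecialLinearGroup (Fin 2) ℂ,
      (∑ i, toSphere (mobius g (p i))) ≠ 0) ∧
    IsGLB {r : ℝ | ∃ g : Matrix.SpecialLinearGroup (Fin 2) ℂ,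
        r = ‖∑ i, toSphere (mobius g (p i))‖} ((2 * i0 : ℝ) - n) := by
  classical
  have hle : i0 ≤ n := by
    rw [hi0]
    simpa using Finset.card_filter_le Finset.univ (fun i => p i = q)
  have hbigR : (n : ℝ) < 2 * i0 := by exact_mod_cast hbig
  have lower := fun g => lower_bound n p q i0 hi0 g
  refine ⟨?_, ?_, ?_⟩
  · intro g h
    have := lower g
    rw [h, norm_zero] at this
    linarith
  · rintro r ⟨g, rfl⟩
    exact lower g
  · intro b hb
    -- build g₀ sending q to [1 : 0]
    have hs : Complex.normSq (q.rep 0) + Complex.normSq (q.rep 1) ≠ 0 :=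
      s_ne_zero q.rep_nonzero
    set a := q.rep 0 with ha
    set bq := q.rep 1 with hbqdef
    set s : ℝ := Complex.normSq a + Complex.normSq bq with hsdef
    have hsC : (s : ℂ) ≠ 0 := Complex.ofReal_ne_zero.mpr hs
    have h1 : (starRingEnd ℂ) a * a = (Complex.normSq a : ℂ) := by
      rw [mul_comm, Complex.mul_conj]
    have h2 : (starRingEnd ℂ) bq * bq = (Complex.normSq bq : ℂ) := by
      rw [mul_comm, Complex.mul_conj]
    set M0 : Matrix (Fin 2) (Fin 2) ℂ :=
      !![(starRingEnd ℂ) a / (s : ℂ), (starRingEnd ℂ) bq / (s : ℂ); -bq, a] with hM0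
    have hdet : M0.det = 1 := by
      rw [hM0, Matrix.det_fin_two_of]
      rw [show (starRingEnd ℂ) a / (s : ℂ) * a - (starRingEnd ℂ) bq / (s : ℂ) * (-bq)
          = ((Complex.normSq a : ℂ) + (Complex.normSq bq : ℂ)) / (s : ℂ) by
        rw [← h1, ← h2]; ring]
      rw [← Complex.ofReal_add, ← hsdef, div_self hsC]
    set g0 : Matrix.SpecialLinearGroup (Fin 2) ℂ := ⟨M0, hdet⟩ with hg0
    have hcoe0 : (g0 : Matrix (Fin 2) (Fin 2) ℂ) = M0 := rfl
    have hq0 : (g0 : Matrix (Fin 2) (Fin 2) ℂ).mulVec q.rep = ![1, 0] := by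
      rw [hcoe0, hM0]
      funext j
      fin_cases j
      · show (starRingEnd ℂ) a / (s : ℂ) * a + ((starRingEnd ℂ) bq / (s : ℂ) * bq + 0) = 1
        rw [show (starRingEnd ℂ) a / (s : ℂ) * a + ((starRingEnd ℂ) bq / (s : ℂ) * bq + 0)
            = ((Complex.normSq a : ℂ) + (Complex.normSq bq : ℂ)) / (s : ℂ) by
          rw [← h1, ← h2]; ring]
        rw [← Complex.ofReal_add, ← hsdef, div_self hsC]
      · show -bq * a + (a * bq + 0) = 0
        ring
    -- the scaling sequence
    set τ : ℕ → ℝ := fun k => ((k : ℝ) + 1)⁻¹ with hτ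
    have hτpos : ∀ k, 0 < τ k := fun k => by rw [hτ]; positivity
    have hτC : ∀ k, ((τ k : ℝ) : ℂ) ≠ 0 :=
      fun k => Complex.ofReal_ne_zero.mpr (hτpos k).ne'
    have hdiag : ∀ (c : ℂ) (v : Fin 2 → ℂ), c ≠ 0 →
        (!![c, 0; 0, c⁻¹]).mulVec v = ![c * v 0, c⁻¹ * v 1] := by
      intro c v hc
      funext j
      fin_cases j <;> simp [Matrix.mulVec, dotProduct, Fin.sum_univ_two]
    set dk : ℕ → Matrix.SpecialLinearGroup (Fin 2) ℂ := fun k =>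
      ⟨!![((τ k : ℝ) : ℂ), 0; 0, (((τ k : ℝ) : ℂ))⁻¹], by
        rw [Matrix.det_fin_two_of, mul_inv_cancel₀ (hτC k)]; ring⟩ with hdk
    have hcoedk : ∀ k, ((dk k : Matrix.SpecialLinearGroup (Fin 2) ℂ) :
        Matrix (Fin 2) (Fin 2) ℂ) = !![((τ k : ℝ) : ℂ), 0; 0, (((τ k : ℝ) : ℂ))⁻¹] :=
      fun k => rfl
    set gk : ℕ → Matrix.SpecialLinearGroup (Fin 2) ℂ := fun k => dk k * g0 with hgk
    have hterm : ∀ (k : ℕ) (i : Fin n),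
        toSphere (mobius (gk k) (p i))
          = F ![((τ k : ℝ) : ℂ) * (g0 : Matrix (Fin 2) (Fin 2) ℂ).mulVec (p i).rep 0,
              (((τ k : ℝ) : ℂ))⁻¹ * (g0 : Matrix (Fin 2) (Fin 2) ℂ).mulVec (p i).rep 1] := by
      intro k i
      rw [toSphere_mobius, hgk]
      rw [Matrix.SpecialLinearGroup.coe_mul, ← Matrix.mulVec_mulVec, hcoedk,
        hdiag _ _ (hτC k)]
    -- pointwise limits
    have hlim : ∀ i : Fin n,
        Filter.Tendsto (fun k : ℕ => toSphere (mobius (gk k) (p i))) Filter.atTop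
          (nhds (if p i = q then north else south)) := by
      intro i
      by_cases hi : p i = q
      · rw [if_pos hi]
        have hvi : (g0 : Matrix (Fin 2) (Fin 2) ℂ).mulVec (p i).rep = ![1, 0] := by
          rw [hi]; exact hq0
        have hconst : ∀ k, toSphere (mobius (gk k) (p i)) = north := by
          intro k
          rw [hterm k i, hvi]
          rw [show ![((τ k : ℝ) : ℂ) * (![1, 0] : Fin 2 → ℂ) 0,
              (((τ k : ℝ) : ℂ))⁻¹ * (![1, 0] : Fin 2 → ℂ) 1]
              = ![((τ k : ℝ) : ℂ), 0] by funext j; fin_cases j <;> simp]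
          exact F_north (hτC k)
        simp only [hconst]
        exact tendsto_const_nhds
      · rw [if_neg hi]
        have hwi : (g0 : Matrix (Fin 2) (Fin 2) ℂ).mulVec (p i).rep 1 ≠ 0 := by
          intro hzero
          apply hi
          have hvne := mulVec_ne_zero g0 (p i).rep_nonzero
          have hv0 : (g0 : Matrix (Fin 2) (Fin 2) ℂ).mulVec (p i).rep 0 ≠ 0 := by
            intro hz
            apply hvne
            funext j
            fin_cases j
            · exact hz
            · exact hzero
          have heq : (g0 : Matrix (Fin 2) (Fin 2) ℂ).mulVec (p i).rep
              = (g0 : Matrix (Fin 2) (Fin 2) ℂ).mulVec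
                  ((g0 : Matrix (Fin 2) (Fin 2) ℂ).mulVec (p i).rep 0 • q.rep) := by
            rw [Matrix.mulVec_smul, hq0]
            funext j
            fin_cases j
            · exact (mul_one _).symm
            · exact hzero.trans (mul_zero _).symm
          have hrep := mulVec_inj g0 heq
          have : p i = Projectivization.mk ℂ (p i).rep (p i).rep_nonzero :=
            (Projectivization.mk_rep _).symm
          rw [this]
          conv_rhs => rw [← Projectivization.mk_rep q]
          rw [Projectivization.mk_eq_mk_iff]
          exact ⟨Units.mk0 _ hv0, hrep.symm⟩
        have := tendsto_F_south ((g0 : Matrix (Fin 2) (Fin 2) ℂ).mulVec (p i).rep 0)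
          ((g0 : Matrix (Fin 2) (Fin 2) ℂ).mulVec (p i).rep 1) hwi
        simp only [hterm]
        exact this
    have hsum : Filter.Tendsto (fun k : ℕ => ∑ i, toSphere (mobius (gk k) (p i)))
        Filter.atTop (nhds (∑ i, if p i = q then north else south)) :=
      tendsto_finset_sum _ (fun i _ => hlim i)
    have hsplit : (∑ i, if p i = q then north else south)
        = (i0 : ℝ) • north + ((n : ℝ) - i0) • south := by
      rw [← Finset.sum_filter_add_sum_filter_not Finset.univ (fun i => p i = q)]
      have e1 : ∑ i ∈ Finset.univ.filter (fun i => p i = q),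
          (if p i = q then north else south) = (i0 : ℝ) • north := by
        rw [Finset.sum_congr rfl (fun i hi => if_pos (Finset.mem_filter.mp hi).2),
          Finset.sum_const, ← hi0, Nat.cast_smul_eq_nsmul ℝ]
      have e2 : ∑ i ∈ Finset.univ.filter (fun i => ¬ p i = q),
          (if p i = q then north else south) = ((n : ℝ) - i0) • south := by
        rw [Finset.sum_congr rfl (fun i hi => if_neg (Finset.mem_filter.mp hi).2),
          Finset.sum_const]
        rw [Finset.filter_not, Finset.card_sdiff_of_subset (Finset.filter_subset _ _),
          Finset.card_univ, Fintype.card_fin, ← hi0, ← Nat.cast_smul_eq_nsmul ℝ,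
          Nat.cast_sub hle]
      rw [e1, e2]
    have hnormL : ‖∑ i, if p i = q then north else south‖ = 2 * (i0 : ℝ) - n := by
      rw [hsplit, norm_combo _ _ (by linarith)]
      ring
    have hnormt : Filter.Tendsto (fun k : ℕ => ‖∑ i, toSphere (mobius (gk k) (p i))‖)
        Filter.atTop (nhds ((2 * i0 : ℝ) - n)) := by
      rw [← hnormL]
      exact (continuous_norm.tendsto _).comp hsum
    refine ge_of_tendsto' hnormt (fun k => hb ⟨gk k, rfl⟩)
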